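/- For any forest T, the family Ψ(T) of local maximum stable sets of T forms a greedoid on the vertex set of T. -/

import Mathlib

open Finset

variable {V : Type*}

/-- A stable (independent) set of vertices. -/
def StableSet (G : SimpleGraph V) (S : Finset V) : Prop :=
  ∀ x ∈ S, ∀ y ∈ S, ¬ G.Adj x y

/-- The closed neighborhood N[S] of a finite vertex set. -/
def closedNbhd [Fintype V] [DecidableEq V] (G : SimpleGraph V) [DecidableRel G.Adj]
    (S : Finset V) : Finset V :=
  S ∪ Finset.univ.filter (fun v => ∃ s ∈ S, G.Adj v s)

/-- Ψ(G): the family of local maximum stable sets of `G`: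
stable sets `S` that are maximum stable sets of the subgraph induced by `N[S]`. -/
def Psi [Fintype V] [DecidableEq V] (G : SimpleGraph V) [DecidableRel G.Adj] :
    Set (Finset V) :=
  {S | StableSet G S ∧
    ∀ T : Finset V, T ⊆ closedNbhd G S → StableSet G T → T.card ≤ S.card}

/-- A maximum stable set of `G`. -/
def MaximumStable (G : SimpleGraph V) (S : Finset V) : Prop :=
  StableSet G S ∧ ∀ T : Finset V, StableSet G T → T.card ≤ S.card

/-- The accessibility property of a set system. -/
def Accessible [DecidableEq V] (F : Set (Finset V)) : Prop :=
  ∀ X ∈ F, X.Nonempty → ∃ x ∈ X, X.erase x ∈ F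

/-- The exchange property of a set system. -/
def ExchangeProp [DecidableEq V] (F : Set (Finset V)) : Prop :=
  ∀ X ∈ F, ∀ Y ∈ F, X.card = Y.card + 1 → ∃ x ∈ X, x ∉ Y ∧ insert x Y ∈ F

/-- A greedoid: a nonempty set system satisfying accessibility and exchange. -/
def IsGreedoid [DecidableEq V] (F : Set (Finset V)) : Prop :=
  F.Nonempty ∧ Accessible F ∧ ExchangeProp F

/-- An accessibility chain for `S`: sets `f 1 ⊆ f 2 ⊆ ... ⊆ f |S| = S`,
with `|f j| = j` and each `f j ∈ Ψ(G)`. -/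
def HasAccessChain [Fintype V] [DecidableEq V] (G : SimpleGraph V) [DecidableRel G.Adj]
    (S : Finset V) : Prop :=
  ∃ f : ℕ → Finset V, f S.card = S ∧
    (∀ j, 1 ≤ j → j ≤ S.card → (f j).card = j ∧ f j ∈ Psi G) ∧
    (∀ j, 1 ≤ j → j < S.card → f j ⊆ f (j + 1))

/-- A matching `M` is uniquely restricted if it is the unique perfect matching of the
subgraph induced by the set of vertices it saturates. -/
def UniquelyRestricted (G : SimpleGraph V) (M : G.Subgraph) : Prop :=
  M.IsMatching ∧ ∀ M' : G.Subgraph, M'.IsMatching → M'.support = M.support →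
    M'.edgeSet = M.edgeSet

/-- A maximum matching: a matching of maximum cardinality. -/
def MaximumMatching (G : SimpleGraph V) (M : G.Subgraph) : Prop :=
  M.IsMatching ∧ ∀ M' : G.Subgraph, M'.IsMatching → M'.edgeSet.ncard ≤ M.edgeSet.ncard

/-- A cycle `c` is alternating with respect to the matching `M` if of any two incident
edges of `c` exactly one belongs to `M`. -/
def AlternatingCycle (G : SimpleGraph V) (M : G.Subgraph) {v : V} (c : G.Walk v v) : Prop :=
  c.IsCycle ∧ ∀ i : Fin c.edges.length,
    (c.edges.get i ∈ M.edgeSet ↔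
      c.edges.get ⟨(i.1 + 1) % c.edges.length,
        Nat.mod_lt _ (lt_of_le_of_lt (Nat.zero_le _) i.2)⟩ ∉ M.edgeSet)

/-- A unicyclic graph: it has a cycle, and all of its cycles have the same edge set. -/
def Unicyclic [DecidableEq V] (G : SimpleGraph V) : Prop :=
  (∃ (v : V) (c : G.Walk v v), c.IsCycle) ∧
  ∀ ⦃v : V⦄ (c : G.Walk v v) ⦃w : V⦄ (d : G.Walk w w), c.IsCycle → d.IsCycle →
    c.edges.toFinset = d.edges.toFinset

/-- The stability number α(G). -/
noncomputable def alphaNum (G : SimpleGraph V) : ℕ :=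
  sSup {n | ∃ S : Finset V, StableSet G S ∧ S.card = n}

/-- The matching number μ(G). -/
noncomputable def muNum (G : SimpleGraph V) : ℕ :=
  sSup {n | ∃ M : G.Subgraph, M.IsMatching ∧ M.edgeSet.ncard = n}

/-- A König–Egerváry graph: α(G) + μ(G) = |V(G)|. -/
def KonigEgervary (G : SimpleGraph V) [Fintype V] : Prop :=
  alphaNum G + muNum G = Fintype.card V



/-- Build a walk from a chain of adjacent vertices. -/
def walkOfChain (G : SimpleGraph V) : (a b : V) → (l : List V) →
    List.Chain G.Adj a (l ++ [b]) → G.Walk a b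
  | _, _, [], h => SimpleGraph.Walk.cons (List.chain_cons.mp h).1 SimpleGraph.Walk.nil
  | a, b, c :: l, h =>
    SimpleGraph.Walk.cons (List.chain_cons.mp h).1 (walkOfChain G c b l (List.chain_cons.mp h).2)

lemma walkOfChain_support (G : SimpleGraph V) (a b : V) (l : List V)
    (h : List.Chain G.Adj a (l ++ [b])) :
    (walkOfChain G a b l h).support = a :: (l ++ [b]) := by
  induction l generalizing a with
  | nil => simp [walkOfChain]
  | cons c l ih => simp [walkOfChain]; exact ih _ _

lemma walkOfChain_length (G : SimpleGraph V) (a b : V) (l : List V)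
    (h : List.Chain G.Adj a (l ++ [b])) :
    (walkOfChain G a b l h).length = l.length + 1 := by
  induction l generalizing a with
  | nil => simp [walkOfChain]
  | cons c l ih => simp [walkOfChain]; exact ih _ _

/-- In an acyclic graph, an edge plus a disjoint nodup chain of length ≥ 2
between the same endpoints is impossible. -/
lemma no_second_path {G : SimpleGraph V} (hG : G.IsAcyclic) {v u : V} (hadj : G.Adj v u)
    (l : List V) (hl : l ≠ []) (hchain : List.Chain G.Adj v (l ++ [u]))
    (hnodup : (v :: (l ++ [u])).Nodup) : False := by
  have hvu : v ≠ u := hadj.ne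
  let p1 : G.Walk v u := SimpleGraph.Walk.cons hadj SimpleGraph.Walk.nil
  have hp1 : p1.IsPath := by
    apply SimpleGraph.Walk.IsPath.mk'
    simp [p1, hvu]
  let p2 : G.Walk v u := walkOfChain G v u l hchain
  have hp2 : p2.IsPath := by
    apply SimpleGraph.Walk.IsPath.mk'
    rw [walkOfChain_support]
    exact hnodup
  have := hG.path_unique ⟨p1, hp1⟩ ⟨p2, hp2⟩
  have hlen : p1.length = p2.length := by
    have h2 := congrArg (fun q : G.Path v u => q.1.length) this
    simpa using h2
  rw [walkOfChain_length] at hlen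
  simp [p1] at hlen
  exact hl hlen

/-- Leaf lemma: in an acyclic graph every nonempty vertex set has a member with
at most one neighbor inside the set. -/
lemma exists_low_degree [Fintype V] [DecidableEq V] {G : SimpleGraph V} [DecidableRel G.Adj]
    (hG : G.IsAcyclic) (A : Finset V) (hA : A.Nonempty) :
    ∃ v ∈ A, (A.filter (G.Adj v)).card ≤ 1 := by
  by_contra hcon
  push_neg at hcon
  have key : ∀ n : ℕ, ∃ l : List V, l.length = n ∧ l.Nodup ∧ (∀ x ∈ l, x ∈ A) ∧
      l.Chain' G.Adj := by
    intro n
    induction n with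
    | zero => exact ⟨[], rfl, by simp, by simp, List.isChain_nil⟩
    | succ n ih =>
      obtain ⟨l, hlen, hnd, hmem, hch⟩ := ih
      match l, hlen, hnd, hmem, hch with
      | [], hlen, _, _, _ =>
        obtain ⟨a, ha⟩ := hA
        exact ⟨[a], by simp [← hlen], by simp, by simp [ha], List.isChain_singleton _⟩
      | v :: t, hlen, hnd, hmem, hch =>
        have hv : v ∈ A := hmem v (by simp)
        have hcard := hcon v hv
        by_cases hext : ∃ u ∈ A.filter (G.Adj v), u ∉ v :: t
        · obtain ⟨u, hu, hunotin⟩ := hext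
          rw [mem_filter] at hu
          refine ⟨u :: v :: t, by simpa using hlen, ?_, ?_, ?_⟩
          · exact List.nodup_cons.mpr ⟨hunotin, hnd⟩
          · intro x hx; rcases List.mem_cons.mp hx with h|h
            · exact h ▸ hu.1
            · exact hmem x h
          · exact List.isChain_cons.mpr ⟨fun y hy => by
              simp at hy; exact hy ▸ hu.2.symm, hch⟩
        · exfalso
          push_neg at hext
          obtain ⟨u1, hu1, u2, hu2, hne⟩ := Finset.one_lt_card.mp hcard
          have hmemt : ∀ u ∈ A.filter (G.Adj v), u ∈ t := by
            intro u hu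
            have := hext u hu
            rw [mem_filter] at hu
            rcases List.mem_cons.mp this with h|h
            · exact absurd (h ▸ hu.2) (G.irrefl)
            · exact h
          -- t is nonempty
          match t, hnd, hmem, hch, hmemt with
          | [], _, _, _, hmemt => exact absurd (hmemt u1 hu1) (by simp)
          | h' :: t', hnd, hmem, hch, hmemt =>
            -- one of u1, u2 lies in t'
            have huse : ∃ u ∈ A.filter (G.Adj v), u ∈ t' := by
              rcases List.mem_cons.mp (hmemt u1 hu1) with h1|h1
              · rcases List.mem_cons.mp (hmemt u2 hu2) with h2|h2
                · exact absurd (h1.trans h2.symm) hne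
                · exact ⟨u2, hu2, h2⟩
              · exact ⟨u1, hu1, h1⟩
            obtain ⟨u, hu, hut'⟩ := huse
            rw [mem_filter] at hu
            obtain ⟨t1, t2, ht'⟩ := List.append_of_mem hut'
            subst ht'
            -- build the long path  v :: h' :: t1 ++ [u]
            have hpre : (v :: h' :: (t1 ++ [u])) <+: (v :: h' :: (t1 ++ u :: t2)) := by
              refine ⟨t2, by simp⟩
            have hchain2 : List.Chain G.Adj v ((h' :: t1) ++ [u]) := by
              have := (List.IsChain.prefix hch hpre)
              exact this
            have hnodup2 : (v :: ((h' :: t1) ++ [u])).Nodup := by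
              have := List.Nodup.sublist hpre.sublist hnd
              simpa using this
            exact no_second_path hG hu.2 (h' :: t1) (by simp) hchain2 hnodup2
  obtain ⟨l, hlen, hnd, -, -⟩ := key (Fintype.card V + 1)
  have := List.Nodup.length_le_card hnd
  omega

/-- Counting lemma: if `A` and `B` are disjoint, `A` nonempty, and every vertex of `A`
has at least two neighbors in `B`, then `|B| ≥ |A| + 1` (in an acyclic graph). -/
lemma two_nbrs_card [Fintype V] [DecidableEq V] {G : SimpleGraph V} [DecidableRel G.Adj]
    (hG : G.IsAcyclic) : ∀ (n : ℕ) (A B : Finset V), B.card ≤ n → Disjoint A B →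
    A.Nonempty → (∀ a ∈ A, 2 ≤ (B.filter (G.Adj a)).card) → A.card + 1 ≤ B.card := by
  intro n
  induction n with
  | zero =>
    intro A B hB _ hA h2
    obtain ⟨a, ha⟩ := hA
    have := h2 a ha
    have : (B.filter (G.Adj a)).card ≤ B.card := card_le_card (filter_subset _ _)
    omega
  | succ n ih =>
    intro A B hB hdisj hA h2
    obtain ⟨v, hvAB, hvdeg⟩ := exists_low_degree hG (A ∪ B)
      (hA.mono subset_union_left)
    have hvB : v ∈ B := by
      rcases mem_union.mp hvAB with h|h
      · exfalso
        have hsub : B.filter (G.Adj v) ⊆ (A ∪ B).filter (G.Adj v) :=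
          filter_subset_filter _ subset_union_right
        have := card_le_card hsub
        have := h2 v h
        have hcomm : B.filter (fun b => G.Adj v b) = B.filter (fun b => G.Adj b v) := by
          apply filter_congr; intro x _; simp [SimpleGraph.adj_comm]
        omega
      · exact h
    have hvnA : v ∉ A := fun h => (disjoint_left.mp hdisj h hvB).elim
    set A' := A.filter (fun a => G.Adj a v) with hA'
    have hA'card : A'.card ≤ 1 := by
      have hsub : A' ⊆ (A ∪ B).filter (G.Adj v) := by
        intro a ha
        rw [hA', mem_filter] at ha
        exact mem_filter.mpr ⟨mem_union_left _ ha.1, ha.2.symm⟩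
      exact le_trans (card_le_card hsub) hvdeg
    have hBe : (B.erase v).card ≤ n := by
      have := card_erase_of_mem hvB
      omega
    have hkey : ∀ a ∈ A, a ∉ A' → 2 ≤ ((B.erase v).filter (G.Adj a)).card := by
      intro a haA haA'
      have hnadj : ¬ G.Adj a v := by
        intro h
        exact haA' (by rw [hA']; exact mem_filter.mpr ⟨haA, h⟩)
      have : (B.erase v).filter (G.Adj a) = B.filter (G.Adj a) := by
        apply Finset.ext
        intro x
        simp only [mem_filter, mem_erase]
        constructor
        · rintro ⟨⟨_, hx⟩, hadj⟩; exact ⟨hx, hadj⟩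
        · rintro ⟨hx, hadj⟩
          refine ⟨⟨?_, hx⟩, hadj⟩
          rintro rfl; exact hnadj hadj
      rw [this]; exact h2 a haA
    rcases A'.eq_empty_or_nonempty with hA'e | ⟨a₀, ha₀⟩
    · have := ih A (B.erase v) hBe (hdisj.mono_right (erase_subset _ _)) hA
        (fun a ha => hkey a ha (by rw [hA'e]; simp))
      have := card_erase_of_mem hvB
      omega
    · have ha₀A : a₀ ∈ A := (mem_filter.mp ha₀).1
      by_cases hAsing : A = {a₀}
      · have := h2 a₀ ha₀A
        have hle : (B.filter (G.Adj a₀)).card ≤ B.card := card_le_card (filter_subset _ _)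
        rw [hAsing]
        simp only [card_singleton]
        omega
      · have hAe : (A.erase a₀).Nonempty := by
          rcases (A.erase a₀).eq_empty_or_nonempty with h | h
          · exfalso
            apply hAsing
            apply Finset.eq_singleton_iff_unique_mem.mpr
            refine ⟨ha₀A, fun x hx => ?_⟩
            by_contra hne
            exact absurd (mem_erase.mpr ⟨hne, hx⟩) (by rw [h]; simp)
          · exact h
        have := ih (A.erase a₀) (B.erase v) hBe
          ((hdisj.mono_left (erase_subset _ _)).mono_right (erase_subset _ _)) hAe
          (fun a ha => by
            have haA : a ∈ A := (mem_erase.mp ha).2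
            refine hkey a haA (fun hmem => ?_)
            have : a = a₀ := by
              by_contra hne
              have h2' : ({a, a₀} : Finset V) ⊆ A' := by
                intro x hx
                rcases mem_insert.mp hx with rfl | hx
                · exact hmem
                · rw [mem_singleton.mp hx]; exact ha₀
              have := card_le_card h2'
              rw [card_insert_of_notMem (by simp [hne]), card_singleton] at this
              omega
            exact (mem_erase.mp ha).1 this)
        have h1 := card_erase_of_mem hvB
        have h2' := card_erase_of_mem ha₀A
        have : 1 ≤ A.card := card_pos.mpr hA
        omega

lemma StableSet.insert' {G : SimpleGraph V} {R : Finset V} {v : V} [DecidableEq V]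
    (hR : StableSet G R) (hv : ∀ r ∈ R, ¬ G.Adj v r) : StableSet G (insert v R) := by
  intro x hx y hy hadj
  rcases Finset.mem_insert.mp hx with heqx | hx' <;>
    rcases Finset.mem_insert.mp hy with heqy | hy'
  · exact G.irrefl (heqx ▸ heqy ▸ hadj)
  · exact hv y hy' (heqx ▸ hadj)
  · exact hv x hx' (heqy ▸ hadj).symm
  · exact hR x hx' y hy' hadj

/-- Any finite set of vertices of an acyclic graph contains a stable subset of at
least half its size. -/
lemma half_stable [Fintype V] [DecidableEq V] {G : SimpleGraph V} [DecidableRel G.Adj]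
    (hG : G.IsAcyclic) : ∀ (n : ℕ) (A : Finset V), A.card ≤ n →
    ∃ R ⊆ A, StableSet G R ∧ A.card ≤ 2 * R.card := by
  intro n
  induction n with
  | zero =>
    intro A hA
    exact ⟨∅, empty_subset _, fun x hx => by simp at hx, by omega⟩
  | succ n ih =>
    intro A hA
    rcases A.eq_empty_or_nonempty with rfl | hAne
    · exact ⟨∅, empty_subset _, fun x hx => by simp at hx, by simp⟩
    obtain ⟨v, hvA, hvdeg⟩ := exists_low_degree hG A hAne
    rcases (A.filter (G.Adj v)).eq_empty_or_nonempty with hvnbr | ⟨u, hu⟩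
    · have hcard : (A.erase v).card ≤ n := by
        have := card_erase_of_mem hvA
        have : 1 ≤ A.card := card_pos.mpr hAne
        omega
      obtain ⟨R', hR'sub, hR'st, hR'card⟩ := ih (A.erase v) hcard
      have hvR' : v ∉ R' := fun h => (mem_erase.mp (hR'sub h)).1 rfl
      refine ⟨insert v R', ?_, ?_, ?_⟩
      · intro x hx
        rcases mem_insert.mp hx with rfl | hx
        · exact hvA
        · exact (erase_subset _ _) (hR'sub hx)
      · exact hR'st.insert' (fun r hr hadj =>
          absurd (mem_filter.mpr ⟨(erase_subset _ _) (hR'sub hr), hadj⟩)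
            (by rw [hvnbr]; simp))
      · rw [card_insert_of_notMem hvR']
        have := card_erase_of_mem hvA
        omega
    · rw [mem_filter] at hu
      have hune : u ≠ v := fun h => G.irrefl (h ▸ hu.2)
      have hcard : ((A.erase v).erase u).card ≤ n := by
        have h1 := card_erase_of_mem hvA
        have h2 : u ∈ A.erase v := mem_erase.mpr ⟨hune, hu.1⟩
        have h3 := card_erase_of_mem h2
        have : 1 ≤ A.card := card_pos.mpr hAne
        omega
      obtain ⟨R', hR'sub, hR'st, hR'card⟩ := ih ((A.erase v).erase u) hcard
      have hvR' : v ∉ R' := fun h => (mem_erase.mp ((erase_subset _ _) (hR'sub h))).1 rfl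
      have hvadjR' : ∀ r ∈ R', ¬ G.Adj v r := by
        intro r hr hadj
        have hrA : r ∈ A := (erase_subset _ _) ((erase_subset _ _) (hR'sub hr))
        have hrmem : r ∈ A.filter (G.Adj v) := mem_filter.mpr ⟨hrA, hadj⟩
        have hum : u ∈ A.filter (G.Adj v) := mem_filter.mpr hu
        have : r = u := by
          by_contra hne
          have hsub : ({r, u} : Finset V) ⊆ A.filter (G.Adj v) := by
            intro x hx
            rcases mem_insert.mp hx with rfl | hx
            · exact hrmem
            · rw [mem_singleton.mp hx]; exact hum
          have := card_le_card hsub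
          rw [card_insert_of_notMem (by simp [hne]), card_singleton] at this
          omega
        exact (mem_erase.mp (hR'sub hr)).1 this
      refine ⟨insert v R', ?_, ?_, ?_⟩
      · intro x hx
        rcases mem_insert.mp hx with rfl | hx
        · exact hvA
        · exact (erase_subset _ _) ((erase_subset _ _) (hR'sub hx))
      · exact hR'st.insert' hvadjR'
      · rw [card_insert_of_notMem hvR']
        have h1 := card_erase_of_mem hvA
        have h2 : u ∈ A.erase v := mem_erase.mpr ⟨hune, hu.1⟩
        have h3 := card_erase_of_mem h2
        omega


/-- Sufficiency: a stable set whose outer boundary admits a matching into it is a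
local maximum stable set. -/
lemma mem_psi_of_matching [Fintype V] [DecidableEq V] {G : SimpleGraph V} [DecidableRel G.Adj]
    {S : Finset V} (hS : StableSet G S) (f : V → V)
    (hf : ∀ w ∈ closedNbhd G S \ S, f w ∈ S ∧ G.Adj w (f w))
    (hinj : Set.InjOn f ↑(closedNbhd G S \ S)) : S ∈ Psi G := by
  classical
  refine ⟨hS, fun T hTsub hTst => ?_⟩
  apply Finset.card_le_card_of_injOn (fun t => if t ∈ S then t else f t)
  · intro t ht
    by_cases h : t ∈ S
    · simpa [h]
    · have htw : t ∈ closedNbhd G S \ S := Finset.mem_sdiff.mpr ⟨hTsub ht, h⟩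
      simpa [h] using (hf t htw).1
  · intro t1 ht1 t2 ht2 heq
    simp only at heq
    by_cases h1 : t1 ∈ S <;> by_cases h2 : t2 ∈ S
    · simpa [h1, h2] using heq
    · exfalso
      have htw : t2 ∈ closedNbhd G S \ S := Finset.mem_sdiff.mpr ⟨hTsub ht2, h2⟩
      have hadj : G.Adj t2 t1 := by
        have := (hf t2 htw).2
        rw [show f t2 = t1 by simpa [h1, h2] using heq.symm] at this
        exact this
      exact hTst t2 ht2 t1 ht1 hadj
    · exfalso
      have htw : t1 ∈ closedNbhd G S \ S := Finset.mem_sdiff.mpr ⟨hTsub ht1, h1⟩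
      have hadj : G.Adj t1 t2 := by
        have := (hf t1 htw).2
        rw [show f t1 = t2 by simpa [h1, h2] using heq] at this
        exact this
      exact hTst t1 ht1 t2 ht2 hadj
    · have htw1 : t1 ∈ closedNbhd G S \ S := Finset.mem_sdiff.mpr ⟨hTsub ht1, h1⟩
      have htw2 : t2 ∈ closedNbhd G S \ S := Finset.mem_sdiff.mpr ⟨hTsub ht2, h2⟩
      exact hinj (by exact_mod_cast htw1) (by exact_mod_cast htw2)
        (by simpa [h1, h2] using heq)

/-- Necessity (for forests): a local maximum stable set admits a matching of its
outer boundary into it. -/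
lemma matching_of_mem_psi [Fintype V] [DecidableEq V] {G : SimpleGraph V} [DecidableRel G.Adj]
    (hG : G.IsAcyclic) {S : Finset V} (hS : S ∈ Psi G) :
    ∃ f : V → V, (∀ w ∈ closedNbhd G S \ S, f w ∈ S ∧ G.Adj w (f w)) ∧
      Set.InjOn f ↑(closedNbhd G S \ S) := by
  classical
  set W := closedNbhd G S \ S with hW
  have hWS : ∀ w ∈ W, w ∉ S := fun w hw => (Finset.mem_sdiff.mp hw).2
  set t : {w // w ∈ W} → Finset V := fun w => S.filter (G.Adj ↑w) with ht
  have hall : ∀ s : Finset {w // w ∈ W}, s.card ≤ (s.biUnion t).card := by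
    intro s
    by_contra hlt
    push_neg at hlt
    set A := s.image Subtype.val with hA
    set B := s.biUnion t with hB
    have hAcard : A.card = s.card := Finset.card_image_of_injective s Subtype.val_injective
    have hBS : B ⊆ S := by
      intro b hb
      obtain ⟨w, _, hbw⟩ := Finset.mem_biUnion.mp hb
      exact (Finset.mem_filter.mp hbw).1
    have hAW : A ⊆ W := by
      intro a ha
      obtain ⟨w, _, rfl⟩ := Finset.mem_image.mp ha
      exact w.2
    have hdisj : Disjoint A B := by
      rw [Finset.disjoint_left]
      intro a haA haB
      exact hWS a (hAW haA) (hBS haB)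
    obtain ⟨R, hRsub, hRst, hRcard⟩ := half_stable hG (Fintype.card V) (A ∪ B)
      (le_trans (Finset.card_le_univ _) (le_of_eq Finset.card_univ))
    have hcardAB : (A ∪ B).card = A.card + B.card := Finset.card_union_of_disjoint hdisj
    have hRB : B.card < R.card := by omega
    set T := (S \ B) ∪ R with hT
    have hdisj2 : Disjoint (S \ B) R := by
      rw [Finset.disjoint_left]
      intro x hx hxR
      rcases Finset.mem_union.mp (hRsub hxR) with h | h
      · exact hWS x (hAW h) (Finset.mem_sdiff.mp hx).1
      · exact (Finset.mem_sdiff.mp hx).2 h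
    have hTcard : S.card + 1 ≤ T.card := by
      have h1 : T.card = (S \ B).card + R.card := Finset.card_union_of_disjoint hdisj2
      have h2 : (S \ B).card = S.card - B.card := Finset.card_sdiff_of_subset hBS
      have h3 : B.card ≤ S.card := Finset.card_le_card hBS
      omega
    have hTsub : T ⊆ closedNbhd G S := by
      intro x hx
      rcases Finset.mem_union.mp hx with h | h
      · exact Finset.mem_union_left _ (Finset.mem_sdiff.mp h).1
      · rcases Finset.mem_union.mp (hRsub h) with h' | h'
        · exact (Finset.mem_sdiff.mp (hAW h')).1
        · exact Finset.mem_union_left _ (hBS h')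
    have hcross : ∀ x ∈ S \ B, ∀ r ∈ R, ¬ G.Adj x r := by
      intro x hx r hr hadj
      rcases Finset.mem_union.mp (hRsub hr) with h | h
      · obtain ⟨w, hws, hwval⟩ := Finset.mem_image.mp h
        have : x ∈ B := Finset.mem_biUnion.mpr ⟨w, hws, Finset.mem_filter.mpr
          ⟨(Finset.mem_sdiff.mp hx).1, by rw [hwval]; exact hadj.symm⟩⟩
        exact (Finset.mem_sdiff.mp hx).2 this
      · exact hS.1 x (Finset.mem_sdiff.mp hx).1 r (hBS h) hadj
    have hTst : StableSet G T := by
      intro x hx y hy hadj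
      rcases Finset.mem_union.mp hx with h1 | h1 <;> rcases Finset.mem_union.mp hy with h2 | h2
      · exact hS.1 x (Finset.mem_sdiff.mp h1).1 y (Finset.mem_sdiff.mp h2).1 hadj
      · exact hcross x h1 y h2 hadj
      · exact hcross y h2 x h1 hadj.symm
      · exact hRst x h1 y h2 hadj
    have := hS.2 T hTsub hTst
    omega
  obtain ⟨f₀, hf₀inj, hf₀mem⟩ :=
    (Finset.all_card_le_biUnion_card_iff_exists_injective t).mp hall
  refine ⟨fun v => if h : v ∈ W then f₀ ⟨v, h⟩ else v, ?_, ?_⟩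
  · intro w hw
    have := hf₀mem ⟨w, hw⟩
    rw [ht] at this
    simp only [Finset.mem_filter] at this
    simp only [dif_pos hw]
    exact ⟨this.1, this.2⟩
  · intro w1 hw1 w2 hw2 heq
    simp only [Finset.mem_coe] at hw1 hw2
    simp only [dif_pos hw1, dif_pos hw2] at heq
    exact congrArg Subtype.val (hf₀inj heq)


section Helpers
variable [Fintype V] [DecidableEq V] {G : SimpleGraph V} [DecidableRel G.Adj]

lemma subset_closedNbhd (S : Finset V) : S ⊆ closedNbhd G S :=
  Finset.subset_union_left

lemma mem_closedNbhd_of_adj {S : Finset V} {v s : V} (hs : s ∈ S) (h : G.Adj v s) :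
    v ∈ closedNbhd G S :=
  Finset.mem_union_right _ (Finset.mem_filter.mpr ⟨Finset.mem_univ _, ⟨s, hs, h⟩⟩)

lemma mem_closedNbhd_cases {S : Finset V} {v : V} (h : v ∈ closedNbhd G S) :
    v ∈ S ∨ ∃ s ∈ S, G.Adj v s := by
  rcases Finset.mem_union.mp h with h | h
  · exact Or.inl h
  · exact Or.inr (Finset.mem_filter.mp h).2

lemma stable_subset {S T : Finset V} (hS : StableSet G S) (h : T ⊆ S) : StableSet G T :=
  fun x hx y hy => hS x (h hx) y (h hy)

lemma empty_mem_psi : (∅ : Finset V) ∈ Psi G := by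
  constructor
  · intro x hx; simp at hx
  · intro T hT _
    have hempty : closedNbhd G (∅ : Finset V) = ∅ := by
      simp [closedNbhd]
    rw [hempty] at hT
    simp [Finset.subset_empty.mp hT]

lemma psi_accessible (hG : G.IsAcyclic) : Accessible (Psi G) := by
  classical
  intro S hSPsi hSne
  obtain ⟨f, hf, hinj⟩ := matching_of_mem_psi hG hSPsi
  set W := closedNbhd G S \ S with hWdef
  have hWsub : ∀ {S' : Finset V} {v : V}, v ∈ S → S' = S.erase v →
      ∀ w ∈ closedNbhd G S' \ S', w ∈ W ∧ ∃ s ∈ S', G.Adj w s := by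
    intro S' v hvS hS' w hw
    obtain ⟨hw1, hw2⟩ := Finset.mem_sdiff.mp hw
    rcases mem_closedNbhd_cases hw1 with h | h
    · exact absurd h hw2
    · obtain ⟨s, hs, hadj⟩ := h
      have hsS : s ∈ S := by rw [hS'] at hs; exact Finset.erase_subset _ _ hs
      have hwS : w ∉ S := by
        intro hmem
        rcases eq_or_ne w v with rfl | hne
        · exact hSPsi.1 w hmem s hsS hadj
        · exact hw2 (by rw [hS']; exact Finset.mem_erase.mpr ⟨hne, hmem⟩)
      exact ⟨Finset.mem_sdiff.mpr ⟨mem_closedNbhd_of_adj hsS hadj, hwS⟩, ⟨s, hs, hadj⟩⟩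
  by_cases hcase : ∃ v ∈ S, v ∉ W.image f
  · obtain ⟨v, hvS, hv⟩ := hcase
    refine ⟨v, hvS, ?_⟩
    apply mem_psi_of_matching (stable_subset hSPsi.1 (Finset.erase_subset _ _)) f
    · intro w hw
      obtain ⟨hwW, _, hs, hadj⟩ := hWsub hvS rfl w hw
      refine ⟨?_, (hf w hwW).2⟩
      have hfwS := (hf w hwW).1
      refine Finset.mem_erase.mpr ⟨?_, hfwS⟩
      intro heq
      exact hv (Finset.mem_image.mpr ⟨w, hwW, heq⟩)
    · intro w1 hw1 w2 hw2 heq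
      have h1 := (hWsub hvS rfl w1 (by exact_mod_cast hw1)).1
      have h2 := (hWsub hvS rfl w2 (by exact_mod_cast hw2)).1
      exact hinj (by exact_mod_cast h1) (by exact_mod_cast h2) heq
  · push_neg at hcase
    have hSsub : S ⊆ W.image f := fun v hv => hcase v hv
    have hcardSW : S.card ≤ W.card :=
      le_trans (Finset.card_le_card hSsub) Finset.card_image_le
    have hw0 : ∃ w₀ ∈ W, (S.filter (G.Adj w₀)).card ≤ 1 := by
      by_contra hcon
      push_neg at hcon
      have hWne : W.Nonempty := by
        obtain ⟨v, hvS⟩ := hSne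
        obtain ⟨w, hw, -⟩ := Finset.mem_image.mp (hSsub hvS)
        exact ⟨w, hw⟩
      have := two_nbrs_card hG (Fintype.card V) W S
        (le_trans (Finset.card_le_univ _) (le_of_eq Finset.card_univ))
        Finset.sdiff_disjoint hWne (fun w hw => hcon w hw)
      omega
    obtain ⟨w₀, hw₀W, hw₀deg⟩ := hw0
    have hw₀nbr : ∃ s ∈ S, G.Adj w₀ s := by
      rcases mem_closedNbhd_cases (Finset.mem_sdiff.mp hw₀W).1 with h | h
      · exact absurd h (Finset.mem_sdiff.mp hw₀W).2
      · exact h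
    obtain ⟨s₀, hs₀S, hs₀adj⟩ := hw₀nbr
    have huniq : ∀ s ∈ S, G.Adj w₀ s → s = s₀ := by
      intro s hs hadj
      by_contra hne
      have hsub : ({s, s₀} : Finset V) ⊆ S.filter (G.Adj w₀) := by
        intro x hx
        rcases Finset.mem_insert.mp hx with rfl | hx
        · exact Finset.mem_filter.mpr ⟨hs, hadj⟩
        · rw [Finset.mem_singleton.mp hx]
          exact Finset.mem_filter.mpr ⟨hs₀S, hs₀adj⟩
      have := Finset.card_le_card hsub
      rw [Finset.card_insert_of_notMem (by simp [hne]), Finset.card_singleton] at this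
      omega
    have hfw₀ : f w₀ = s₀ := huniq (f w₀) (hf w₀ hw₀W).1 (hf w₀ hw₀W).2
    refine ⟨s₀, hs₀S, ?_⟩
    apply mem_psi_of_matching (stable_subset hSPsi.1 (Finset.erase_subset _ _)) f
    · intro w hw
      obtain ⟨hwW, s, hs, hadj⟩ := hWsub hs₀S rfl w hw
      have hwne : w ≠ w₀ := by
        rintro rfl
        have := huniq s (Finset.erase_subset _ _ hs) hadj
        exact (Finset.mem_erase.mp hs).1 this
      refine ⟨?_, (hf w hwW).2⟩
      refine Finset.mem_erase.mpr ⟨?_, (hf w hwW).1⟩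
      intro heq
      exact hwne (hinj (by exact_mod_cast hwW) (by exact_mod_cast hw₀W) (heq.trans hfw₀.symm))
    · intro w1 hw1 w2 hw2 heq
      have h1 := (hWsub hs₀S rfl w1 (by exact_mod_cast hw1)).1
      have h2 := (hWsub hs₀S rfl w2 (by exact_mod_cast hw2)).1
      exact hinj (by exact_mod_cast h1) (by exact_mod_cast h2) heq

end Helpers


lemma psi_exchange [Fintype V] [DecidableEq V] {G : SimpleGraph V} [DecidableRel G.Adj]
    (hG : G.IsAcyclic) : ExchangeProp (Psi G) := by
  classical
  intro X hX Y hY hcard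
  obtain ⟨g, hg, hginj⟩ := matching_of_mem_psi hG hY
  set NY := closedNbhd G Y with hNYdef
  have hCcard : (X ∩ NY).card ≤ Y.card :=
    hY.2 (X ∩ NY) Finset.inter_subset_right (stable_subset hX.1 Finset.inter_subset_left)
  have hsplit : (X ∩ NY).card + (X \ NY).card = X.card := Finset.card_inter_add_card_sdiff X NY
  have hDne : (X \ NY).Nonempty := Finset.card_pos.mp (by omega)
  have hDX : X \ NY ⊆ X := Finset.sdiff_subset
  have hmain : ∃ x ∈ X \ NY,
      (Finset.univ.filter (fun v => G.Adj x v ∧ v ∉ NY)).card ≤ 1 := by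
    by_contra hcon
    push_neg at hcon
    set D := X \ NY with hDdef
    set Q := Finset.univ.filter (fun v => v ∉ NY ∧ ∃ x ∈ D, G.Adj x v) with hQdef
    have hQNY : ∀ q ∈ Q, q ∉ NY := fun q hq => (Finset.mem_filter.mp hq).2.1
    have hQadjD : ∀ q ∈ Q, ∃ x ∈ D, G.Adj x q := fun q hq => (Finset.mem_filter.mp hq).2.2
    have hdisjDQ : Disjoint D Q := by
      rw [Finset.disjoint_left]
      intro d hd hdQ
      obtain ⟨x, hx, hadj⟩ := hQadjD d hdQ
      exact hX.1 x (hDX hx) d (hDX hd) hadj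
    have h2 : ∀ x ∈ D, 2 ≤ (Q.filter (G.Adj x)).card := by
      intro x hx
      refine le_trans (hcon x hx) (Finset.card_le_card ?_)
      intro v hv
      rw [Finset.mem_filter] at hv ⊢
      exact ⟨Finset.mem_filter.mpr ⟨Finset.mem_univ _, hv.2.2, ⟨x, hx, hv.2.1⟩⟩, hv.2.1⟩
    have hQcard : D.card + 1 ≤ Q.card := two_nbrs_card hG (Fintype.card V) D Q
      (le_trans (Finset.card_le_univ _) (le_of_eq Finset.card_univ)) hdisjDQ hDne h2
    obtain ⟨R, hRsub, hRst, hRcard⟩ := half_stable hG (Fintype.card V) (D ∪ Q)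
      (le_trans (Finset.card_le_univ _) (le_of_eq Finset.card_univ))
    have hcardDQ : (D ∪ Q).card = D.card + Q.card := Finset.card_union_of_disjoint hdisjDQ
    have hRD : D.card + 1 ≤ R.card := by omega
    set CY := X ∩ Y with hCYdef
    set CW := (X ∩ NY) \ Y with hCWdef
    have hCWW : CW ⊆ closedNbhd G Y \ Y := fun c hc => Finset.mem_sdiff.mpr
      ⟨(Finset.mem_inter.mp (Finset.mem_sdiff.mp hc).1).2, (Finset.mem_sdiff.mp hc).2⟩
    have hgC : ∀ c ∈ CW, g c ∈ Y ∧ G.Adj c (g c) := fun c hc => hg c (hCWW hc)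
    have hCWX : ∀ c ∈ CW, c ∈ X := fun c hc =>
      (Finset.mem_inter.mp (Finset.mem_sdiff.mp hc).1).1
    set T := (CY ∪ CW.image g) ∪ R with hTdef
    have hRNY : ∀ r ∈ R, r ∉ NY := by
      intro r hr
      rcases Finset.mem_union.mp (hRsub hr) with h | h
      · exact (Finset.mem_sdiff.mp h).2
      · exact hQNY r h
    have hYpart : ∀ a ∈ CY ∪ CW.image g, a ∈ Y := by
      intro a ha
      rcases Finset.mem_union.mp ha with h | h
      · exact (Finset.mem_inter.mp h).2
      · obtain ⟨c, hc, hgc⟩ := Finset.mem_image.mp h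
        exact hgc ▸ (hgC c hc).1
    have hdisj1 : Disjoint CY (CW.image g) := by
      rw [Finset.disjoint_left]
      intro a ha haim
      obtain ⟨c, hc, hgc⟩ := Finset.mem_image.mp haim
      have hadj : G.Adj c a := hgc ▸ (hgC c hc).2
      exact hX.1 c (hCWX c hc) a (Finset.mem_inter.mp ha).1 hadj
    have hdisj2 : Disjoint (CY ∪ CW.image g) R := by
      rw [Finset.disjoint_left]
      intro a ha haR
      exact hRNY a haR (subset_closedNbhd Y (hYpart a ha))
    have hTcard : X.card + 1 ≤ T.card := by
      have e1 : T.card = (CY ∪ CW.image g).card + R.card :=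
        Finset.card_union_of_disjoint hdisj2
      have e2 : (CY ∪ CW.image g).card = CY.card + (CW.image g).card :=
        Finset.card_union_of_disjoint hdisj1
      have e3 : (CW.image g).card = CW.card :=
        Finset.card_image_of_injOn (hginj.mono (by
          intro c hc
          exact_mod_cast hCWW (by exact_mod_cast hc)))
      have e4 : CY.card + CW.card = (X ∩ NY).card := by
        have hCYeq : CY = (X ∩ NY) ∩ Y := by
          ext a
          simp only [hCYdef, Finset.mem_inter]
          constructor
          · rintro ⟨h1, h2⟩; exact ⟨⟨h1, subset_closedNbhd Y h2⟩, h2⟩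
          · rintro ⟨⟨h1, _⟩, h2⟩; exact ⟨h1, h2⟩
        rw [hCYeq, hCWdef]
        exact Finset.card_inter_add_card_sdiff _ _
      omega
    have hTsub : T ⊆ closedNbhd G X := by
      intro a ha
      rcases Finset.mem_union.mp ha with h | h
      · rcases Finset.mem_union.mp h with h' | h'
        · exact subset_closedNbhd X ((Finset.mem_inter.mp h').1)
        · obtain ⟨c, hc, hgc⟩ := Finset.mem_image.mp h'
          exact mem_closedNbhd_of_adj (hCWX c hc) (hgc ▸ (hgC c hc).2.symm)
      · rcases Finset.mem_union.mp (hRsub h) with h' | h'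
        · exact subset_closedNbhd X (hDX h')
        · obtain ⟨x, hx, hadj⟩ := hQadjD a h'
          exact mem_closedNbhd_of_adj (hDX hx) hadj.symm
    have hTst : StableSet G T := by
      intro x hx y hy hadj
      rcases Finset.mem_union.mp hx with h1 | h1 <;> rcases Finset.mem_union.mp hy with h2 | h2
      · exact hY.1 x (hYpart x h1) y (hYpart y h2) hadj
      · exact hRNY y h2 (mem_closedNbhd_of_adj (hYpart x h1) hadj.symm)
      · exact hRNY x h1 (mem_closedNbhd_of_adj (hYpart y h2) hadj)
      · exact hRst x h1 y h2 hadj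
    have := hX.2 T hTsub hTst
    omega
  obtain ⟨x, hxD, hxdeg⟩ := hmain
  have hxX : x ∈ X := (Finset.mem_sdiff.mp hxD).1
  have hxNY : x ∉ NY := (Finset.mem_sdiff.mp hxD).2
  have hxY : x ∉ Y := fun h => hxNY (subset_closedNbhd Y h)
  have hxadjY : ∀ y ∈ Y, ¬ G.Adj x y := fun y hy hadj =>
    hxNY (mem_closedNbhd_of_adj hy hadj)
  refine ⟨x, hxX, hxY, ?_⟩
  have hadjx : ∀ w, w ∈ closedNbhd G (insert x Y) \ insert x Y → w ∉ NY → G.Adj w x := by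
    intro w hw hwNY
    obtain ⟨hw1, hw2⟩ := Finset.mem_sdiff.mp hw
    rcases mem_closedNbhd_cases hw1 with h | h
    · exact absurd h hw2
    obtain ⟨s, hs, hadj⟩ := h
    rcases Finset.mem_insert.mp hs with rfl | hsY
    · exact hadj
    · exact absurd (mem_closedNbhd_of_adj hsY hadj) hwNY
  apply mem_psi_of_matching (StableSet.insert' hY.1 hxadjY)
    (fun w => if w ∈ NY then g w else x)
  · intro w hw
    obtain ⟨hw1, hw2⟩ := Finset.mem_sdiff.mp hw
    have hwY : w ∉ Y := fun h => hw2 (Finset.mem_insert.mpr (Or.inr h))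
    by_cases hcase : w ∈ NY
    · have hwW : w ∈ NY \ Y := Finset.mem_sdiff.mpr ⟨hcase, hwY⟩
      rw [if_pos hcase]
      exact ⟨Finset.mem_insert.mpr (Or.inr (hg w hwW).1), (hg w hwW).2⟩
    · rw [if_neg hcase]
      exact ⟨Finset.mem_insert_self x Y, hadjx w hw hcase⟩
  · intro w1 hw1 w2 hw2 heq
    beta_reduce at heq
    have hm1 : w1 ∈ closedNbhd G (insert x Y) \ insert x Y := by exact_mod_cast hw1
    have hm2 : w2 ∈ closedNbhd G (insert x Y) \ insert x Y := by exact_mod_cast hw2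
    have hw1Y : w1 ∉ Y := fun h => (Finset.mem_sdiff.mp hm1).2 (Finset.mem_insert.mpr (Or.inr h))
    have hw2Y : w2 ∉ Y := fun h => (Finset.mem_sdiff.mp hm2).2 (Finset.mem_insert.mpr (Or.inr h))
    by_cases h1 : w1 ∈ NY <;> by_cases h2 : w2 ∈ NY
    · rw [if_pos h1, if_pos h2] at heq
      exact hginj (by exact_mod_cast Finset.mem_sdiff.mpr ⟨h1, hw1Y⟩)
        (by exact_mod_cast Finset.mem_sdiff.mpr ⟨h2, hw2Y⟩) heq
    · rw [if_pos h1, if_neg h2] at heq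
      exact absurd (heq ▸ (hg w1 (Finset.mem_sdiff.mpr ⟨h1, hw1Y⟩)).1) hxY
    · rw [if_neg h1, if_pos h2] at heq
      exact absurd (heq ▸ (hg w2 (Finset.mem_sdiff.mpr ⟨h2, hw2Y⟩)).1) hxY
    · have hmem1 : w1 ∈ Finset.univ.filter (fun v => G.Adj x v ∧ v ∉ NY) :=
        Finset.mem_filter.mpr ⟨Finset.mem_univ _, (hadjx w1 hm1 h1).symm, h1⟩
      have hmem2 : w2 ∈ Finset.univ.filter (fun v => G.Adj x v ∧ v ∉ NY) :=
        Finset.mem_filter.mpr ⟨Finset.mem_univ _, (hadjx w2 hm2 h2).symm, h2⟩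
      exact Finset.card_le_one.mp hxdeg w1 hmem1 w2 hmem2

/-- For any forest `T`, the family Ψ(T) is a greedoid on its vertex set. -/
theorem psi_forest_greedoid [Fintype V] [DecidableEq V] (G : SimpleGraph V)
    [DecidableRel G.Adj] (hG : G.IsAcyclic) : IsGreedoid (Psi G) :=
  ⟨⟨∅, empty_mem_psi⟩, psi_accessible hG, psi_exchange hG⟩
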